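/- Let M = U ⊕ U(2) ⊕ A2(2). Then the discriminant group A_M = M*/M is isomorphic to (Z/2Z)^4 ⊕ Z/3Z, and the number of elements a of A_M with (order of a, q_M(a)) equal to (1,0), (2,0), (2,1), (3,-4/3), (6,-1/3), (6,-4/3) is 1, 5, 10, 2, 20, 10 respectively. -/

import Mathlib

noncomputable section
open Matrix

def Mgram : Matrix (Fin 6) (Fin 6) ℚ :=
  !![0,1,0,0,0,0; 1,0,0,0,0,0; 0,0,0,2,0,0; 0,0,2,0,0,0; 0,0,0,0,-4,2; 0,0,0,0,2,-4]

/-- bilinear form of M -/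
def bilM (x y : Fin 6 → ℚ) : ℚ := dotProduct x (Mgram.mulVec y)

lemma bilM_add_left (x y z : Fin 6 → ℚ) : bilM (x + y) z = bilM x z + bilM y z :=
  add_dotProduct x y _

lemma bilM_neg_left (x z : Fin 6 → ℚ) : bilM (-x) z = -bilM x z :=
  neg_dotProduct x _

def IsInt (q : ℚ) : Prop := ∃ n : ℤ, q = n

/-- dual lattice M* inside ℚ^6 -/
def dualM : AddSubgroup (Fin 6 → ℚ) where
  carrier := {x | ∀ v : Fin 6 → ℤ, IsInt (bilM x (fun i => (v i : ℚ)))}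
  zero_mem' := fun v => ⟨0, by simp [bilM]⟩
  add_mem' := by
    rintro x y hx hy v
    obtain ⟨a, ha⟩ := hx v; obtain ⟨b, hb⟩ := hy v
    exact ⟨a + b, by rw [bilM_add_left, ha, hb]; push_cast; ring⟩
  neg_mem' := by
    rintro x hx v
    obtain ⟨a, ha⟩ := hx v
    exact ⟨-a, by rw [bilM_neg_left, ha]; push_cast; ring⟩

/-- the lattice M ⊂ M* -/
def latM : AddSubgroup dualM where
  carrier := {x | ∀ i, IsInt (x.1 i)}
  zero_mem' := fun i => ⟨0, by simp⟩
  add_mem' := by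
    rintro x y hx hy i
    obtain ⟨a, ha⟩ := hx i; obtain ⟨b, hb⟩ := hy i
    exact ⟨a + b, by show x.1 i + y.1 i = _; rw [ha, hb]; push_cast; ring⟩
  neg_mem' := by
    rintro x hx i
    obtain ⟨a, ha⟩ := hx i
    exact ⟨-a, by show -(x.1 i) = _; rw [ha]; push_cast; ring⟩

/-- discriminant group A_M = M*/M -/
def AM := dualM ⧸ latM

instance : AddCommGroup AM := by unfold AM; infer_instance

def mkAM : dualM → AM := QuotientAddGroup.mk

/-- `q_M(a) = c mod 2ℤ` -/
def qvalM (a : AM) (c : ℚ) : Prop :=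
  ∀ x : dualM, mkAM x = a → ∃ n : ℤ, bilM x.1 x.1 - c = 2 * n


/-- For `M = U ⊕ U(2) ⊕ A2(2)`, the discriminant group `A_M = M*/M` is isomorphic
to `(ℤ/2)⁴ ⊕ ℤ/3`, and the number of elements `a ∈ A_M` with
`(order of a, q_M(a))` equal to `(1,0), (2,0), (2,1), (3,-4/3), (6,-1/3), (6,-4/3)`
is `1, 5, 10, 2, 20, 10` respectively. -/

lemma bilM_eval (x y : Fin 6 → ℚ) : bilM x y =
    x 0 * y 1 + x 1 * y 0 + 2*(x 2 * y 3) + 2*(x 3 * y 2)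
      + (-4)*(x 4 * y 4) + 2*(x 4 * y 5) + 2*(x 5 * y 4) + (-4)*(x 5 * y 5) := by
  simp [bilM, Mgram, mulVec, dotProduct, Fin.sum_univ_succ, Matrix.cons_val_zero,
    Matrix.cons_val_succ]
  ring

lemma mem_dualM_iff (x : Fin 6 → ℚ) :
    x ∈ dualM ↔ ∃ a b cc d u v : ℤ, x 0 = a ∧ x 1 = b ∧ 2 * x 2 = cc ∧ 2 * x 3 = d ∧
      6 * x 4 = u ∧ 6 * x 5 = v ∧ 3 ∣ u + v := by
  constructor
  · intro h
    obtain ⟨b, hb⟩ := h (fun i => if i = 0 then 1 else 0)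
    obtain ⟨a, ha⟩ := h (fun i => if i = 1 then 1 else 0)
    obtain ⟨d, hd⟩ := h (fun i => if i = 2 then 1 else 0)
    obtain ⟨cc, hc⟩ := h (fun i => if i = 3 then 1 else 0)
    obtain ⟨p, hp⟩ := h (fun i => if i = 4 then 1 else 0)
    obtain ⟨q, hq⟩ := h (fun i => if i = 5 then 1 else 0)
    rw [bilM_eval] at ha hb hc hd hp hq
    simp only [Fin.reduceEq, reduceIte] at ha hb hc hd hp hq
    push_cast at ha hb hc hd hp hq
    norm_num at ha hb hc hd hp hq
    refine ⟨a, b, cc, d, -(2*p+q), -(p+2*q), ha, hb, by linarith, by linarith, ?_, ?_,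
      ⟨-(p+q), by ring⟩⟩
    · push_cast; linarith
    · push_cast; linarith
  · rintro ⟨a, b, cc, d, u, v, ha, hb, hc, hd, hu, hv, k, hk⟩ w
    have hk' : (u : ℚ) + v = 3 * k := by exact_mod_cast congrArg (Int.cast : ℤ → ℚ) hk
    refine ⟨w 0 * b + w 1 * a + w 2 * d + w 3 * cc + w 4 * (k - u) + w 5 * (k - v), ?_⟩
    rw [bilM_eval]
    push_cast
    linear_combination (w 1:ℚ)*ha + (w 0:ℚ)*hb + (w 3:ℚ)*hc + (w 2:ℚ)*hd +
      ((-4*(w 4:ℚ)+2*(w 5:ℚ))/6)*hu + ((2*(w 4:ℚ)-4*(w 5:ℚ))/6)*hv + (((w 4:ℚ)+(w 5:ℚ))/3)*hk'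

abbrev G6 := (Fin 4 → ZMod 2) × ZMod 3

lemma num_add_cast {n : ℕ} {p q : ℚ} (hp : IsInt p) (hq : IsInt q) :
    (((p + q).num : ZMod n)) = (p.num : ZMod n) + (q.num : ZMod n) := by
  obtain ⟨a, rfl⟩ := hp; obtain ⟨b, rfl⟩ := hq
  rw [← Int.cast_add, Rat.num_intCast, Rat.num_intCast, Rat.num_intCast]
  push_cast; ring

def phi : dualM →+ G6 where
  toFun x := (![((2 * x.1 2).num : ZMod 2), ((2 * x.1 3).num : ZMod 2),
      ((6 * x.1 4).num : ZMod 2), ((6 * x.1 5).num : ZMod 2)], ((6 * x.1 4).num : ZMod 3))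
  map_zero' := by
    refine Prod.ext ?_ ?_
    · funext i; fin_cases i <;> simp
    · simp
  map_add' := by
    intro x y
    obtain ⟨a, b, cc, d, u, v, ha, hb, hc, hd, hu, hv, -⟩ := (mem_dualM_iff x.1).mp x.2
    obtain ⟨a', b', cc', d', u', v', ha', hb', hc', hd', hu', hv', -⟩ := (mem_dualM_iff y.1).mp y.2
    have hxy : (↑(x + y) : Fin 6 → ℚ) = x.1 + y.1 := rfl
    refine Prod.ext ?_ ?_
    · funext i
      fin_cases i <;>
        simp only [hxy, Pi.add_apply, mul_add, Matrix.cons_val_zero, Matrix.cons_val_one,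
          Matrix.head_cons, Matrix.cons_val_two, Matrix.tail_cons, Matrix.cons_val_three,
          Prod.fst_add, Pi.add_apply, Matrix.cons_val', Matrix.cons_val_fin_one, Matrix.empty_val'] <;>
        [exact num_add_cast ⟨cc, hc⟩ ⟨cc', hc'⟩; exact num_add_cast ⟨d, hd⟩ ⟨d', hd'⟩;
         exact num_add_cast ⟨u, hu⟩ ⟨u', hu'⟩; exact num_add_cast ⟨v, hv⟩ ⟨v', hv'⟩]
    · show (((6 * (x.1 + y.1) 4).num : ZMod 3)) = _
      simp only [Pi.add_apply, mul_add]
      exact num_add_cast ⟨u, hu⟩ ⟨u', hu'⟩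

lemma ker_phi : phi.ker = latM := by
  ext x
  rw [AddMonoidHom.mem_ker]
  obtain ⟨a, b, cc, d, u, v, ha, hb, hc, hd, hu, hv, h3⟩ := (mem_dualM_iff x.1).mp x.2
  constructor
  · intro h
    have h0 := congrArg (fun g => g.1 0) h
    have h1 := congrArg (fun g => g.1 1) h
    have h2 := congrArg (fun g => g.1 2) h
    have h3' := congrArg (fun g => g.1 3) h
    have h4 := congrArg (fun g => g.2) h
    simp only [phi, AddMonoidHom.coe_mk, ZeroHom.coe_mk, Matrix.cons_val_zero,
      Matrix.cons_val_one, Matrix.head_cons, Matrix.cons_val_two, Matrix.tail_cons,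
      Matrix.cons_val_three, Prod.fst_zero, Prod.snd_zero, Pi.zero_apply] at h0 h1 h2 h3' h4
    rw [hc, Rat.num_intCast] at h0
    rw [hd, Rat.num_intCast] at h1
    rw [hu, Rat.num_intCast] at h2 h4
    rw [hv, Rat.num_intCast] at h3'
    rw [ZMod.intCast_zmod_eq_zero_iff_dvd] at h0 h1 h2 h3' h4
    -- now h0 : 2 ∣ cc, h1 : 2 ∣ d, h2 : 2 ∣ u, h3' : 2 ∣ v, h4 : 3 ∣ u
    intro i
    fin_cases i
    · exact ⟨a, ha⟩
    · exact ⟨b, hb⟩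
    · obtain ⟨m, rfl⟩ := h0
      exact ⟨m, by have := hc; push_cast at this ⊢; linarith⟩
    · obtain ⟨m, rfl⟩ := h1
      exact ⟨m, by have := hd; push_cast at this ⊢; linarith⟩
    · have h6 : (6:ℤ) ∣ u := by omega
      obtain ⟨m, rfl⟩ := h6
      exact ⟨m, by have := hu; push_cast at this ⊢; linarith⟩
    · have h6 : (6:ℤ) ∣ v := by omega
      obtain ⟨m, rfl⟩ := h6
      exact ⟨m, by have := hv; push_cast at this ⊢; linarith⟩
  · intro h
    obtain ⟨m2, hm2⟩ := h 2
    obtain ⟨m3, hm3⟩ := h 3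
    obtain ⟨m4, hm4⟩ := h 4
    obtain ⟨m5, hm5⟩ := h 5
    have e2 : 2 * x.1 2 = ((2 * m2 : ℤ) : ℚ) := by rw [hm2]; push_cast; ring
    have e3 : 2 * x.1 3 = ((2 * m3 : ℤ) : ℚ) := by rw [hm3]; push_cast; ring
    have e4 : 6 * x.1 4 = ((6 * m4 : ℤ) : ℚ) := by rw [hm4]; push_cast; ring
    have e5 : 6 * x.1 5 = ((6 * m5 : ℤ) : ℚ) := by rw [hm5]; push_cast; ring
    refine Prod.ext ?_ ?_
    · funext i
      fin_cases i <;>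
        simp only [phi, AddMonoidHom.coe_mk, ZeroHom.coe_mk, Fin.zero_eta, Fin.mk_one,
          Fin.reduceFinMk, Matrix.cons_val_zero,
          Matrix.cons_val_one, Matrix.head_cons, Matrix.cons_val_two, Matrix.tail_cons,
          Matrix.cons_val_three, Prod.fst_zero, Pi.zero_apply]
      · rw [e2, Rat.num_intCast]; rw [ZMod.intCast_zmod_eq_zero_iff_dvd]; omega
      · rw [e3, Rat.num_intCast]; rw [ZMod.intCast_zmod_eq_zero_iff_dvd]; omega
      · rw [e4, Rat.num_intCast]; rw [ZMod.intCast_zmod_eq_zero_iff_dvd]; omega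
      · rw [e5, Rat.num_intCast]; rw [ZMod.intCast_zmod_eq_zero_iff_dvd]; omega
    · show ((6 * x.1 4).num : ZMod 3) = 0
      rw [e4, Rat.num_intCast]
      rw [ZMod.intCast_zmod_eq_zero_iff_dvd]; omega

def sec (g : G6) : Fin 6 → ℚ :=
  ![0, 0, ((g.1 0).val : ℚ) / 2, ((g.1 1).val : ℚ) / 2,
    ((3 * (g.1 2).val + 4 * g.2.val : ℤ) : ℚ) / 6,
    ((3 * (g.1 3).val - 4 * g.2.val : ℤ) : ℚ) / 6]

lemma sec_mem (g : G6) : sec g ∈ dualM := by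
  rw [mem_dualM_iff]
  refine ⟨0, 0, (g.1 0).val, (g.1 1).val, 3 * (g.1 2).val + 4 * g.2.val,
    3 * (g.1 3).val - 4 * g.2.val, by simp [sec], by simp [sec], ?_, ?_, ?_, ?_,
    ⟨(g.1 2).val + (g.1 3).val, by ring⟩⟩
  · show 2 * (((g.1 0).val : ℚ) / 2) = _; push_cast; ring
  · show 2 * (((g.1 1).val : ℚ) / 2) = _; push_cast; ring
  · show 6 * (((3 * (g.1 2).val + 4 * g.2.val : ℤ) : ℚ) / 6) = _; push_cast; ring
  · show 6 * (((3 * (g.1 3).val - 4 * g.2.val : ℤ) : ℚ) / 6) = _; push_cast; ring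

def secD (g : G6) : dualM := ⟨sec g, sec_mem g⟩

lemma zmod2_abs1 : ∀ a k : ZMod 2, 3 * a + 4 * k = a := by decide
lemma zmod2_abs2 : ∀ a k : ZMod 2, 3 * a - 4 * k = a := by decide
lemma zmod3_abs : ∀ b z : ZMod 3, 3 * b + 4 * z = z := by decide

lemma phi_sec : ∀ g : G6, phi (secD g) = g := by
  intro g
  refine Prod.ext ?_ ?_
  · funext i
    fin_cases i <;>
      simp only [phi, AddMonoidHom.coe_mk, ZeroHom.coe_mk, Fin.zero_eta, Fin.mk_one,
        Fin.reduceFinMk, Matrix.cons_val_zero, Matrix.cons_val_one, Matrix.head_cons,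
        Matrix.cons_val_two, Matrix.tail_cons, Matrix.cons_val_three]
    · have h : 2 * (secD g).1 2 = (((g.1 0).val : ℤ) : ℚ) := by
        show 2 * (((g.1 0).val : ℚ) / 2) = _; push_cast; ring
      rw [h, Rat.num_intCast, Int.cast_natCast, ZMod.natCast_val, ZMod.cast_id]
    · have h : 2 * (secD g).1 3 = (((g.1 1).val : ℤ) : ℚ) := by
        show 2 * (((g.1 1).val : ℚ) / 2) = _; push_cast; ring
      rw [h, Rat.num_intCast, Int.cast_natCast, ZMod.natCast_val, ZMod.cast_id]
    · have h : 6 * (secD g).1 4 = ((3 * (g.1 2).val + 4 * g.2.val : ℤ) : ℚ) := by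
        show 6 * (_ / 6) = _; ring
      rw [h, Rat.num_intCast]
      push_cast [ZMod.natCast_val, ZMod.cast_id]
      exact zmod2_abs1 _ _
    · have h : 6 * (secD g).1 5 = ((3 * (g.1 3).val - 4 * g.2.val : ℤ) : ℚ) := by
        show 6 * (_ / 6) = _; ring
      rw [h, Rat.num_intCast]
      push_cast [ZMod.natCast_val, ZMod.cast_id]
      exact zmod2_abs2 _ _
  · show ((6 * (secD g).1 4).num : ZMod 3) = g.2
    have h : 6 * (secD g).1 4 = ((3 * (g.1 2).val + 4 * g.2.val : ℤ) : ℚ) := by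
      show 6 * (_ / 6) = _; ring
    rw [h, Rat.num_intCast]
    push_cast [ZMod.natCast_val, ZMod.cast_id]
    exact zmod3_abs _ _

noncomputable def eAM : AM ≃+ G6 :=
  (QuotientAddGroup.quotientAddEquivOfEq ker_phi.symm).trans
    (QuotientAddGroup.quotientKerEquivOfRightInverse phi secD phi_sec)

lemma eAM_apply (x : dualM) : eAM (mkAM x) = phi x := rfl

lemma eAM_symm (g : G6) : eAM.symm g = mkAM (secD g) := by
  apply eAM.injective
  rw [AddEquiv.apply_symm_apply, eAM_apply, phi_sec]

lemma bil_expand (x l : Fin 6 → ℚ) :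
    bilM (x + l) (x + l) = bilM x x + 2 * bilM x l + bilM l l := by
  simp only [bilM_eval, Pi.add_apply]; ring

lemma bil_int (x l : dualM) (hl : l ∈ latM) : ∃ p : ℤ, bilM x.1 l.1 = p := by
  choose m hm using hl
  have h : l.1 = fun i => ((m i : ℤ) : ℚ) := funext hm
  rw [h]; exact x.2 m

lemma bil_even (l : dualM) (hl : l ∈ latM) : ∃ q : ℤ, bilM l.1 l.1 = 2 * q := by
  choose m hm using hl
  refine ⟨m 0 * m 1 + 2*(m 2 * m 3) - 2*(m 4 * m 4) + 2*(m 4 * m 5) - 2*(m 5 * m 5), ?_⟩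
  rw [bilM_eval, hm 0, hm 1, hm 2, hm 3, hm 4, hm 5]; push_cast; ring

lemma qval_mk_iff (x : dualM) (c : ℚ) :
    qvalM (mkAM x) c ↔ ∃ n : ℤ, bilM x.1 x.1 - c = 2 * n := by
  constructor
  · exact fun h => h x rfl
  · rintro ⟨n, hn⟩ y hy
    have h1 : -y + x ∈ latM := (QuotientAddGroup.eq).mp hy
    have hl : y - x ∈ latM := by
      have h2 : y - x = -(-y + x) := by abel
      rw [h2]; exact neg_mem h1
    obtain ⟨p, hp⟩ := bil_int x (y - x) hl
    obtain ⟨q, hq⟩ := bil_even (y - x) hl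
    have hyx : y.1 = x.1 + (y - x).1 := by
      show _ = _ + (y.1 - x.1); ring
    refine ⟨n + p + q, ?_⟩
    rw [hyx, bil_expand, hp, hq]
    push_cast
    linarith

def Ug (g : G6) : ℤ := 3 * (g.1 2).val + 4 * g.2.val
def Vg (g : G6) : ℤ := 3 * (g.1 3).val - 4 * g.2.val
def Ng (g : G6) : ℤ := 9 * ((g.1 0).val * (g.1 1).val) - (Ug g ^ 2 - Ug g * Vg g + Vg g ^ 2)

lemma Q_sec (g : G6) : bilM (sec g) (sec g) = (Ng g : ℚ) / 9 := by
  have e0 : sec g 0 = 0 := rfl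
  have e1 : sec g 1 = 0 := rfl
  have e2 : sec g 2 = ((g.1 0).val : ℚ) / 2 := rfl
  have e3 : sec g 3 = ((g.1 1).val : ℚ) / 2 := rfl
  have e4 : sec g 4 = ((Ug g : ℤ) : ℚ) / 6 := rfl
  have e5 : sec g 5 = ((Vg g : ℤ) : ℚ) / 6 := rfl
  rw [bilM_eval, e0, e1, e2, e3, e4, e5, Ng]
  push_cast
  field_simp
  ring

lemma qval_sec_iff (g : G6) (c : ℚ) (m : ℤ) (hc : (m : ℚ) = 9 * c) :
    qvalM (eAM.symm g) c ↔ (18 : ℤ) ∣ (Ng g - m) := by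
  rw [eAM_symm, qval_mk_iff]
  have hsec : (secD g).1 = sec g := rfl
  rw [hsec, Q_sec]
  constructor
  · rintro ⟨n, h⟩
    refine ⟨n, ?_⟩
    have h9 : (Ng g : ℚ) - m = 18 * n := by
      rw [hc]
      field_simp at h
      linarith
    exact_mod_cast h9
  · rintro ⟨n, hn⟩
    refine ⟨n, ?_⟩
    have h9 : (Ng g : ℚ) - m = 18 * n := by exact_mod_cast congrArg (Int.cast : ℤ → ℚ) hn
    have h2 : (Ng g : ℚ) = 9 * c + 18 * n := by rw [← hc]; linarith
    rw [h2]; ring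

lemma ordf (f : Fin 4 → ZMod 2) : addOrderOf f = if f = 0 then 1 else 2 := by
  split_ifs with h
  · simp [h]
  · refine addOrderOf_eq_prime ?_ h
    funext i
    simpa using (by decide : ∀ a : ZMod 2, 2 • a = 0) (f i)

lemma ordz (z : ZMod 3) : addOrderOf z = if z = 0 then 1 else 3 := by
  split_ifs with h
  · simp [h]
  · exact addOrderOf_eq_prime ((by decide : ∀ a : ZMod 3, 3 • a = 0) z) h

lemma ordg (g : G6) :
    addOrderOf g = (if g.1 = 0 then 1 else 2) * (if g.2 = 0 then 1 else 3) := by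
  rw [Prod.addOrderOf, ordf, ordz]
  split_ifs <;> rfl

lemma count_eq (k : ℕ) (c : ℚ) (m : ℤ) (hc : (m : ℚ) = 9 * c) :
    {a : AM | addOrderOf a = k ∧ qvalM a c} =
      eAM.symm '' {g : G6 |
        ((if g.1 = 0 then 1 else 2) * (if g.2 = 0 then 1 else 3) = k) ∧ (18:ℤ) ∣ (Ng g - m)} := by
  ext a
  simp only [Set.mem_setOf_eq, Set.mem_image]
  constructor
  · rintro ⟨h1, h2⟩
    refine ⟨eAM a, ⟨?_, ?_⟩, by simp⟩
    · rw [← ordg]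
      exact (addOrderOf_injective eAM.toAddMonoidHom eAM.injective a).trans h1
    · rw [← qval_sec_iff _ c m hc]
      simpa using h2
  · rintro ⟨g, ⟨h1, h2⟩, rfl⟩
    refine ⟨?_, (qval_sec_iff g c m hc).mpr h2⟩
    rw [show eAM.symm g = eAM.symm.toAddMonoidHom g from rfl,
      addOrderOf_injective eAM.symm.toAddMonoidHom eAM.symm.injective g, ordg]
    exact h1

lemma count_card (k : ℕ) (c : ℚ) (m : ℤ) (hc : (m : ℚ) = 9 * c) :
    {a : AM | addOrderOf a = k ∧ qvalM a c}.ncard =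
      ({g : G6 |
        ((if g.1 = 0 then 1 else 2) * (if g.2 = 0 then 1 else 3) = k) ∧ (18:ℤ) ∣ (Ng g - m)}).ncard := by
  rw [count_eq k c m hc, Set.ncard_image_of_injective _ eAM.symm.injective]

lemma gcount (k : ℕ) (m : ℤ) :
    {g : G6 | ((if g.1 = 0 then 1 else 2) * (if g.2 = 0 then 1 else 3) = k) ∧
        (18:ℤ) ∣ (Ng g - m)}.ncard =
      (Finset.univ.filter (fun g : G6 =>
        ((if g.1 = 0 then 1 else 2) * (if g.2 = 0 then 1 else 3) = k) ∧
        (18:ℤ) ∣ (Ng g - m))).card := by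
  rw [Set.ncard_eq_toFinset_card', Set.toFinset_setOf]

theorem discriminant_group_of_M :
    Nonempty (AM ≃+ ((Fin 4 → ZMod 2) × ZMod 3)) ∧
    {a : AM | addOrderOf a = 1 ∧ qvalM a 0}.ncard = 1 ∧
    {a : AM | addOrderOf a = 2 ∧ qvalM a 0}.ncard = 5 ∧
    {a : AM | addOrderOf a = 2 ∧ qvalM a 1}.ncard = 10 ∧
    {a : AM | addOrderOf a = 3 ∧ qvalM a (-4/3)}.ncard = 2 ∧
    {a : AM | addOrderOf a = 6 ∧ qvalM a (-1/3)}.ncard = 20 ∧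
    {a : AM | addOrderOf a = 6 ∧ qvalM a (-4/3)}.ncard = 10 := by
  refine ⟨⟨eAM⟩, ?_, ?_, ?_, ?_, ?_, ?_⟩
  · rw [count_card 1 0 0 (by norm_num), gcount]; decide
  · rw [count_card 2 0 0 (by norm_num), gcount]; decide
  · rw [count_card 2 1 9 (by norm_num), gcount]; decide
  · rw [count_card 3 (-4/3) (-12) (by norm_num), gcount]; decide
  · rw [count_card 6 (-1/3) (-3) (by norm_num), gcount]; decide
  · rw [count_card 6 (-4/3) (-12) (by norm_num), gcount]; decide
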